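/- There exists a set 𝓜_d of d-matchings on [n] with |𝓜_d| ≥ C(n,d)/(4·2^d) and a set 𝓢_d of d-subsets of [n] such that every S ∈ 𝓢_d is fully crossed by a unique matching in 𝓜_d, and every M ∈ 𝓜_d fully crosses at least one S ∈ 𝓢_d. -/

import Mathlib

open Finset

/-- A `d`-matching on `[n]`: `d` edges `(i,j)` with `i < j`, pairwise vertex-disjoint. -/
def IsMatching (n d : ℕ) (M : Finset (Fin n × Fin n)) : Prop :=
  M.card = d ∧ (∀ e ∈ M, e.1 < e.2) ∧
    ∀ e ∈ M, ∀ f ∈ M, e ≠ f → e.1 ≠ f.1 ∧ e.1 ≠ f.2 ∧ e.2 ≠ f.1 ∧ e.2 ≠ f.2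

/-- `M` fully crosses `S` if every edge of `M` has exactly one endpoint in `S`. -/
def FullyCrosses (n : ℕ) (M : Finset (Fin n × Fin n)) (S : Finset (Fin n)) : Prop :=
  ∀ e ∈ M, (e.1 ∈ S ∧ e.2 ∉ S) ∨ (e.1 ∉ S ∧ e.2 ∈ S)

open scoped Classical

namespace MUCM

/-- Left endpoints of a matching. -/
def S0 {n : ℕ} (M : Finset (Fin n × Fin n)) : Finset (Fin n) := M.image Prod.fst

lemma S0_card {n d : ℕ} {M : Finset (Fin n × Fin n)} (hM : IsMatching n d M) :
    (S0 M).card = d := by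
  rw [S0, Finset.card_image_of_injOn, hM.1]
  intro e he f hf h
  by_contra hne
  exact (hM.2.2 e he f hf hne).1 h

lemma S0_crosses {n d : ℕ} {M : Finset (Fin n × Fin n)} (hM : IsMatching n d M) :
    FullyCrosses n M (S0 M) := by
  intro e he
  left
  refine ⟨Finset.mem_image_of_mem _ he, ?_⟩
  intro h
  rw [S0, Finset.mem_image] at h
  obtain ⟨f, hf, hfe⟩ := h
  rcases eq_or_ne e f with rfl | hne
  · exact absurd hfe.symm (ne_of_gt (hM.2.1 e he))
  · exact (hM.2.2 e he f hf hne).2.2.1 hfe.symm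

lemma exists_unique_edge {n d : ℕ} {M : Finset (Fin n × Fin n)} {S : Finset (Fin n)}
    (hM : IsMatching n d M) (hX : FullyCrosses n M S) (hS : S.card = d)
    {s : Fin n} (hs : s ∈ S) : ∃! e, e ∈ M ∧ (e.1 = s ∨ e.2 = s) := by
  classical
  set sEnd : Fin n × Fin n → Fin n := fun e => if e.1 ∈ S then e.1 else e.2 with hsEnd
  have hmem : ∀ e ∈ M, sEnd e ∈ S := by
    intro e he
    rcases hX e he with ⟨h1, h2⟩ | ⟨h1, h2⟩ <;> simp [hsEnd, h1, h2]
  have hinj : Set.InjOn sEnd M := by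
    intro e he f hf h
    by_contra hne
    obtain ⟨h11, h12, h21, h22⟩ := hM.2.2 e he f hf hne
    simp only [hsEnd] at h
    split_ifs at h <;> [exact h11 h; exact h12 h; exact h21 h; exact h22 h]
  have himg : M.image sEnd = S := by
    apply Finset.eq_of_subset_of_card_le
    · intro x hx
      obtain ⟨e, he, rfl⟩ := Finset.mem_image.mp hx
      exact hmem e he
    · rw [Finset.card_image_of_injOn hinj, hM.1, hS]
  have hex : ∃ e, e ∈ M ∧ (e.1 = s ∨ e.2 = s) := by
    have : s ∈ M.image sEnd := himg ▸ hs
    obtain ⟨e, he, hes⟩ := Finset.mem_image.mp this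
    refine ⟨e, he, ?_⟩
    simp only [hsEnd] at hes
    split_ifs at hes <;> [left; right] <;> exact hes
  obtain ⟨e, he, hes⟩ := hex
  refine ⟨e, ⟨he, hes⟩, ?_⟩
  rintro f ⟨hf, hfs⟩
  by_contra hne
  obtain ⟨h11, h12, h21, h22⟩ := hM.2.2 f hf e he hne
  rcases hfs with h | h <;> rcases hes with h' | h'
  · exact h11 (h.trans h'.symm)
  · exact h12 (h.trans h'.symm)
  · exact h21 (h.trans h'.symm)
  · exact h22 (h.trans h'.symm)

/- edge constructors -/
def mkEdge {n : ℕ} (a b : Fin n) : Fin n × Fin n := if a < b then (a, b) else (b, a)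

lemma mkEdge_cases {n : ℕ} (a b : Fin n) : mkEdge a b = (a, b) ∨ mkEdge a b = (b, a) := by
  unfold mkEdge; split_ifs <;> simp

lemma mkEdge_lt {n : ℕ} {a b : Fin n} (h : a ≠ b) : (mkEdge a b).1 < (mkEdge a b).2 := by
  unfold mkEdge; split_ifs with hlt
  · exact hlt
  · exact lt_of_le_of_ne (not_lt.mp hlt) h.symm

lemma mkEdge_fst {n : ℕ} (a b : Fin n) : (mkEdge a b).1 = a ∨ (mkEdge a b).1 = b := by
  rcases mkEdge_cases a b with h | h <;> rw [h] <;> simp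

lemma mkEdge_snd {n : ℕ} (a b : Fin n) : (mkEdge a b).2 = a ∨ (mkEdge a b).2 = b := by
  rcases mkEdge_cases a b with h | h <;> rw [h] <;> simp

lemma mkEdge_inj_aux {n : ℕ} {a b a' b' : Fin n} (h : mkEdge a b = mkEdge a' b') :
    (a = a' ∧ b = b') ∨ (a = b' ∧ b = a') := by
  rcases mkEdge_cases a b with h1 | h1 <;> rcases mkEdge_cases a' b' with h2 | h2 <;>
    rw [h1, h2] at h <;> simp only [Prod.mk.injEq] at h <;> tauto

def otherEnd {n : ℕ} (e : Fin n × Fin n) (s : Fin n) : Fin n := if e.1 = s then e.2 else e.1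

lemma otherEnd_spec {n : ℕ} {e : Fin n × Fin n} {s : Fin n} (hlt : e.1 < e.2)
    (hit : e.1 = s ∨ e.2 = s) :
    (e.1 = s ∧ e.2 = otherEnd e s) ∨ (e.2 = s ∧ e.1 = otherEnd e s) := by
  unfold otherEnd
  rcases hit with h | h
  · left; simp [h]
  · right
    have hne : e.1 ≠ s := by rw [← h]; exact ne_of_lt hlt
    simp [h, hne]

lemma mkEdge_otherEnd {n : ℕ} {e : Fin n × Fin n} {s : Fin n} (hlt : e.1 < e.2)
    (hit : e.1 = s ∨ e.2 = s) : mkEdge s (otherEnd e s) = e := by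
  rcases otherEnd_spec hlt hit with ⟨h1, h2⟩ | ⟨h1, h2⟩
  · rw [← h2, ← h1, mkEdge, if_pos hlt]
  · rw [← h2, ← h1, mkEdge, if_neg (not_lt.mpr hlt.le)]

/- picking the unique edge through s -/
noncomputable def pickEdge {n d : ℕ} {M : Finset (Fin n × Fin n)} {S : Finset (Fin n)}
    (hM : IsMatching n d M) (hX : FullyCrosses n M S) (hS : S.card = d)
    (s : Fin n) (hs : s ∈ S) : Fin n × Fin n :=
  Finset.choose (fun e => e.1 = s ∨ e.2 = s) M (exists_unique_edge hM hX hS hs)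

lemma pickEdge_mem {n d : ℕ} {M : Finset (Fin n × Fin n)} {S : Finset (Fin n)}
    (hM : IsMatching n d M) (hX : FullyCrosses n M S) (hS : S.card = d)
    {s : Fin n} (hs : s ∈ S) : pickEdge hM hX hS s hs ∈ M :=
  Finset.choose_mem _ _ _

lemma pickEdge_hit {n d : ℕ} {M : Finset (Fin n × Fin n)} {S : Finset (Fin n)}
    (hM : IsMatching n d M) (hX : FullyCrosses n M S) (hS : S.card = d)
    {s : Fin n} (hs : s ∈ S) :
    (pickEdge hM hX hS s hs).1 = s ∨ (pickEdge hM hX hS s hs).2 = s :=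
  Finset.choose_property (fun e => e.1 = s ∨ e.2 = s) M (exists_unique_edge hM hX hS hs)

lemma pickEdge_eq {n d : ℕ} {M : Finset (Fin n × Fin n)} {S : Finset (Fin n)}
    (hM : IsMatching n d M) (hX : FullyCrosses n M S) (hS : S.card = d)
    {s : Fin n} (hs : s ∈ S) {e : Fin n × Fin n} (he : e ∈ M) (hit : e.1 = s ∨ e.2 = s) :
    pickEdge hM hX hS s hs = e :=
  (exists_unique_edge hM hX hS hs).unique
    ⟨pickEdge_mem hM hX hS hs, pickEdge_hit hM hX hS hs⟩ ⟨he, hit⟩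

lemma otherEnd_not_mem {n d : ℕ} {M : Finset (Fin n × Fin n)} {S : Finset (Fin n)}
    (hM : IsMatching n d M) (hX : FullyCrosses n M S)
    {e : Fin n × Fin n} (he : e ∈ M) {s : Fin n} (hs : s ∈ S) (hit : e.1 = s ∨ e.2 = s) :
    otherEnd e s ∉ S := by
  rcases otherEnd_spec (hM.2.1 e he) hit with ⟨h1, h2⟩ | ⟨h1, h2⟩ <;>
    rcases hX e he with ⟨g1, g2⟩ | ⟨g1, g2⟩
  · rw [← h2]; exact g2
  · rw [← h1] at hs; exact absurd hs g1
  · rw [← h1] at hs; exact absurd hs g2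
  · rw [← h2]; exact g1

/- the embedding associated to a crossing matching -/
noncomputable def toEmb {n d : ℕ} {M : Finset (Fin n × Fin n)} {S : Finset (Fin n)}
    (hM : IsMatching n d M) (hX : FullyCrosses n M S) (hS : S.card = d) :
    {x : Fin n // x ∈ S} ↪ {x : Fin n // x ∉ S} where
  toFun s := ⟨otherEnd (pickEdge hM hX hS s.1 s.2) s.1,
    otherEnd_not_mem hM hX (pickEdge_mem hM hX hS s.2) s.2 (pickEdge_hit hM hX hS s.2)⟩
  inj' := by
    rintro ⟨s, hs⟩ ⟨s', hs'⟩ h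
    simp only [Subtype.mk.injEq] at h
    apply Subtype.ext
    show s = s'
    by_contra hne
    set e := pickEdge hM hX hS s hs with hedef
    set e' := pickEdge hM hX hS s' hs' with hedef'
    have he : e ∈ M := pickEdge_mem hM hX hS hs
    have he' : e' ∈ M := pickEdge_mem hM hX hS hs'
    have h1 := otherEnd_spec (hM.2.1 e he) (pickEdge_hit hM hX hS hs)
    have h2 := otherEnd_spec (hM.2.1 e' he') (pickEdge_hit hM hX hS hs')
    rcases eq_or_ne e e' with heq | hneq
    · rw [← heq] at h2
      rcases h1 with ⟨a1, b1⟩ | ⟨a1, b1⟩ <;> rcases h2 with ⟨a2, b2⟩ | ⟨a2, b2⟩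
      · exact hne (a1.symm.trans a2)
      · exact (otherEnd_not_mem hM hX he hs (pickEdge_hit hM hX hS hs))
          (by rw [← b1, a2]; exact hs')
      · exact (otherEnd_not_mem hM hX he hs (pickEdge_hit hM hX hS hs))
          (by rw [← b1, a2]; exact hs')
      · exact hne (a1.symm.trans a2)
    · obtain ⟨g11, g12, g21, g22⟩ := hM.2.2 e he e' he' hneq
      rw [← h] at h2
      rcases h1 with ⟨a1, b1⟩ | ⟨a1, b1⟩ <;> rcases h2 with ⟨a2, b2⟩ | ⟨a2, b2⟩
      · exact g22 (b1.trans b2.symm)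
      · exact g21 (b1.trans b2.symm)
      · exact g12 (b1.trans b2.symm)
      · exact g11 (b1.trans b2.symm)

/- the matching associated to an embedding -/
noncomputable def ofEmb {n : ℕ} (S : Finset (Fin n))
    (f : {x : Fin n // x ∈ S} ↪ {x : Fin n // x ∉ S}) : Finset (Fin n × Fin n) :=
  S.attach.image (fun s => mkEdge s.1 (f s).1)

lemma ofEmb_injOn {n : ℕ} (S : Finset (Fin n))
    (f : {x : Fin n // x ∈ S} ↪ {x : Fin n // x ∉ S}) :
    Set.InjOn (fun s : {x // x ∈ S} => mkEdge s.1 (f s).1) S.attach := by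
  rintro s _ s' _ h
  simp only at h
  rcases mkEdge_inj_aux h with ⟨h1, _⟩ | ⟨h1, _⟩
  · exact Subtype.ext h1
  · exact absurd (h1 ▸ s.2) (f s').2

lemma ofEmb_card {n : ℕ} (S : Finset (Fin n))
    (f : {x : Fin n // x ∈ S} ↪ {x : Fin n // x ∉ S}) :
    (ofEmb S f).card = S.card := by
  rw [ofEmb, Finset.card_image_of_injOn (ofEmb_injOn S f), Finset.card_attach]

lemma ofEmb_isMatching {n d : ℕ} (S : Finset (Fin n)) (hS : S.card = d)
    (f : {x : Fin n // x ∈ S} ↪ {x : Fin n // x ∉ S}) :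
    IsMatching n d (ofEmb S f) := by
  have hne : ∀ s : {x // x ∈ S}, s.1 ≠ (f s).1 := by
    intro s h
    exact (f s).2 (h ▸ s.2)
  refine ⟨by rw [ofEmb_card, hS], ?_, ?_⟩
  · intro e he
    obtain ⟨s, _, rfl⟩ := Finset.mem_image.mp he
    exact mkEdge_lt (hne s)
  · intro e he g hg hneq
    obtain ⟨s, _, rfl⟩ := Finset.mem_image.mp he
    obtain ⟨s', _, rfl⟩ := Finset.mem_image.mp hg
    have hss' : s ≠ s' := by rintro rfl; exact hneq rfl
    have hvals : ∀ x : Fin n, (x = s.1 ∨ x = (f s).1) → ∀ y : Fin n,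
        (y = s'.1 ∨ y = (f s').1) → x ≠ y := by
      rintro x (rfl | rfl) y (rfl | rfl)
      · exact fun h => hss' (Subtype.ext h)
      · exact fun h => (f s').2 (h ▸ s.2)
      · exact fun h => (f s).2 (h.symm ▸ s'.2)
      · exact fun h => hss' (f.injective (Subtype.ext h))
    exact ⟨hvals _ (mkEdge_fst _ _) _ (mkEdge_fst _ _),
      hvals _ (mkEdge_fst _ _) _ (mkEdge_snd _ _),
      hvals _ (mkEdge_snd _ _) _ (mkEdge_fst _ _),
      hvals _ (mkEdge_snd _ _) _ (mkEdge_snd _ _)⟩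

lemma ofEmb_crosses {n : ℕ} (S : Finset (Fin n))
    (f : {x : Fin n // x ∈ S} ↪ {x : Fin n // x ∉ S}) :
    FullyCrosses n (ofEmb S f) S := by
  intro e he
  obtain ⟨s, _, rfl⟩ := Finset.mem_image.mp he
  rcases mkEdge_cases s.1 (f s).1 with h | h <;> rw [h]
  · exact Or.inl ⟨s.2, (f s).2⟩
  · exact Or.inr ⟨(f s).2, s.2⟩

lemma ofEmb_toEmb {n d : ℕ} {M : Finset (Fin n × Fin n)} {S : Finset (Fin n)}
    (hM : IsMatching n d M) (hX : FullyCrosses n M S) (hS : S.card = d) :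
    ofEmb S (toEmb hM hX hS) = M := by
  apply Finset.eq_of_subset_of_card_le
  · intro e he
    obtain ⟨s, _, rfl⟩ := Finset.mem_image.mp he
    have hmem := pickEdge_mem hM hX hS s.2
    have := mkEdge_otherEnd (hM.2.1 _ hmem) (pickEdge_hit hM hX hS s.2)
    show mkEdge s.1 (otherEnd (pickEdge hM hX hS s.1 s.2) s.1) ∈ M
    rw [this]
    exact hmem
  · rw [ofEmb_card, hS, hM.1]

lemma toEmb_ofEmb {n d : ℕ} {S : Finset (Fin n)} (hS : S.card = d)
    (f : {x : Fin n // x ∈ S} ↪ {x : Fin n // x ∉ S})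
    (hM : IsMatching n d (ofEmb S f)) (hX : FullyCrosses n (ofEmb S f) S) :
    toEmb hM hX hS = f := by
  apply DFunLike.ext
  intro s
  apply Subtype.ext
  have hcand : mkEdge s.1 (f s).1 ∈ ofEmb S f :=
    Finset.mem_image.mpr ⟨s, Finset.mem_attach _ _, rfl⟩
  have hne : s.1 ≠ (f s).1 := fun h => (f s).2 (h ▸ s.2)
  have hhit : (mkEdge s.1 (f s).1).1 = s.1 ∨ (mkEdge s.1 (f s).1).2 = s.1 := by
    rcases mkEdge_cases s.1 (f s).1 with h | h <;> rw [h] <;> simp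
  have hp : pickEdge hM hX hS s.1 s.2 = mkEdge s.1 (f s).1 :=
    pickEdge_eq hM hX hS s.2 hcand hhit
  show otherEnd (pickEdge hM hX hS s.1 s.2) s.1 = (f s).1
  rw [hp]
  rcases mkEdge_cases s.1 (f s).1 with h | h <;> rw [h] <;> unfold otherEnd <;> simp [hne.symm]

/-- The set of all `d`-matchings. -/
noncomputable def allM (n d : ℕ) : Finset (Finset (Fin n × Fin n)) :=
  univ.filter (IsMatching n d)

lemma mem_allM {n d : ℕ} {M : Finset (Fin n × Fin n)} :
    M ∈ allM n d ↔ IsMatching n d M := by simp [allM]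

/-- The matchings fully crossing `S`. -/
noncomputable def crossers (n d : ℕ) (S : Finset (Fin n)) : Finset (Finset (Fin n × Fin n)) :=
  (allM n d).filter (fun M => FullyCrosses n M S)

lemma mem_crossers {n d : ℕ} {S : Finset (Fin n)} {M : Finset (Fin n × Fin n)} :
    M ∈ crossers n d S ↔ IsMatching n d M ∧ FullyCrosses n M S := by
  simp [crossers, mem_allM]

lemma crossers_card {n d : ℕ} {S : Finset (Fin n)} (hS : S.card = d) :
    (crossers n d S).card = (n - d).descFactorial d := by
  have key : (crossers n d S).card
      = Fintype.card ({x : Fin n // x ∈ S} ↪ {x : Fin n // x ∉ S}) := by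
    rw [← Finset.card_univ]
    exact Finset.card_bij'
      (fun M hM => toEmb (mem_crossers.mp hM).1 (mem_crossers.mp hM).2 hS)
      (fun f _ => ofEmb S f) (fun M hM => Finset.mem_univ _)
      (fun f _ => mem_crossers.mpr ⟨ofEmb_isMatching S hS f, ofEmb_crosses S f⟩)
      (fun M hM => ofEmb_toEmb _ _ _) (fun f _ => toEmb_ofEmb hS f _ _)
  rw [key, Fintype.card_embedding_eq]
  have h1 : Fintype.card {x : Fin n // x ∈ S} = d := by
    rw [Fintype.card_coe, hS]
  have h2 : Fintype.card {x : Fin n // x ∉ S} = n - d := by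
    rw [Fintype.card_subtype_compl, Fintype.card_fin, Fintype.card_coe, hS]
  rw [h1, h2]

lemma crossed_card_le {n d : ℕ} {M : Finset (Fin n × Fin n)} (hM : IsMatching n d M) :
    (((univ : Finset (Fin n)).powersetCard d).filter (fun S => FullyCrosses n M S)).card
      ≤ 2 ^ d := by
  have h2 : (M.powerset).card = 2 ^ d := by rw [Finset.card_powerset, hM.1]
  rw [← h2]
  apply Finset.card_le_card_of_injOn (fun S => M.filter (fun e => e.2 ∈ S))
  · intro S _
    exact Finset.mem_powerset.mpr (Finset.filter_subset _ _)
  · have sub : ∀ S S' : Finset (Fin n), S.card = d → FullyCrosses n M S →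
        FullyCrosses n M S' →
        M.filter (fun e => e.2 ∈ S) = M.filter (fun e => e.2 ∈ S') → S ⊆ S' := by
      intro S S' hSc hXS hXS' hfil x hx
      obtain ⟨e, ⟨he, hit⟩, -⟩ := exists_unique_edge hM hXS hSc hx
      rcases hit with h | h
      · have he2 : e.2 ∉ S := by
          rcases hXS e he with ⟨_, h2⟩ | ⟨h1, _⟩
          · exact h2
          · exact absurd (h ▸ hx) h1
        have hnf : e ∉ M.filter (fun e => e.2 ∈ S') := by
          rw [← hfil]; simp [he2]
        have he2' : e.2 ∉ S' := by
          intro hc; exact hnf (Finset.mem_filter.mpr ⟨he, hc⟩)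
        rcases hXS' e he with ⟨h1, _⟩ | ⟨_, h2⟩
        · exact h ▸ h1
        · exact absurd h2 he2'
      · have hin : e ∈ M.filter (fun e => e.2 ∈ S') := by
          rw [← hfil]; exact Finset.mem_filter.mpr ⟨he, h ▸ hx⟩
        have := (Finset.mem_filter.mp hin).2
        exact h ▸ this
    intro S hS S' hS' h
    simp only [Finset.coe_filter, Set.mem_setOf_eq] at hS hS'
    have hSc := (Finset.mem_powersetCard_univ.mp hS.1)
    have hSc' := (Finset.mem_powersetCard_univ.mp hS'.1)
    exact Finset.Subset.antisymm (sub S S' hSc hS.2 hS'.2 h)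
      (sub S' S hSc' hS'.2 hS.2 h.symm)

lemma double_count {n d : ℕ} :
    n.choose d * (n - d).descFactorial d ≤ (allM n d).card * 2 ^ d := by
  classical
  have swap : ∑ S ∈ (univ : Finset (Fin n)).powersetCard d, (crossers n d S).card
      = ∑ M ∈ allM n d,
          (((univ : Finset (Fin n)).powersetCard d).filter
            (fun S => FullyCrosses n M S)).card := by
    simp only [crossers, Finset.card_filter]
    exact Finset.sum_comm
  have lhs : ∑ S ∈ (univ : Finset (Fin n)).powersetCard d, (crossers n d S).card
      = n.choose d * (n - d).descFactorial d := by
    rw [Finset.sum_congr rfl (fun S hS => crossers_card (Finset.mem_powersetCard_univ.mp hS)),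
      Finset.sum_const, smul_eq_mul, Finset.card_powersetCard, Finset.card_univ,
      Fintype.card_fin]
  calc n.choose d * (n - d).descFactorial d
      = ∑ M ∈ allM n d, (((univ : Finset (Fin n)).powersetCard d).filter
            (fun S => FullyCrosses n M S)).card := by rw [← lhs, swap]
    _ ≤ ∑ M ∈ allM n d, 2 ^ d :=
        Finset.sum_le_sum (fun M hM => crossed_card_le (mem_allM.mp hM))
    _ = (allM n d).card * 2 ^ d := by rw [Finset.sum_const, smul_eq_mul]

lemma expand_pow {α : Type*} [DecidableEq α] (p q : ℝ) (V : Finset α) :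
    (p + q) ^ V.card = ∑ A ∈ V.powerset, p ^ A.card * q ^ (V \ A).card := by
  rw [← Finset.prod_const, Finset.prod_add]
  simp [Finset.prod_const]

lemma weight_sum {α : Type*} [DecidableEq α] (p q : ℝ) (U B : Finset α) (hB : B ⊆ U) :
    ∑ A ∈ U.powerset.filter (fun A => B ⊆ A), p ^ A.card * q ^ (U \ A).card
      = p ^ B.card * (p + q) ^ (U \ B).card := by
  rw [expand_pow, Finset.mul_sum]
  refine Finset.sum_nbij' (fun A => A \ B) (fun A' => A' ∪ B) ?_ ?_ ?_ ?_ ?_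
  · intro A hA
    simp only [Finset.mem_filter, Finset.mem_powerset] at hA
    exact Finset.mem_powerset.mpr (Finset.sdiff_subset_sdiff hA.1 Finset.Subset.rfl)
  · intro A' hA'
    simp only [Finset.mem_powerset] at hA'
    refine Finset.mem_filter.mpr ⟨Finset.mem_powerset.mpr ?_, Finset.subset_union_right⟩
    exact Finset.union_subset (hA'.trans Finset.sdiff_subset) hB
  · intro A hA
    simp only [Finset.mem_filter, Finset.mem_powerset] at hA
    exact Finset.sdiff_union_of_subset hA.2
  · intro A' hA'
    simp only [Finset.mem_powerset] at hA'
    apply Finset.union_sdiff_cancel_right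
    intro x hx1 hx2
    exact fun y hy => absurd ((hA' (hx1 hy))) (by simp [Finset.mem_sdiff, hx2 hy])
  · intro A hA
    simp only [Finset.mem_filter, Finset.mem_powerset] at hA
    have hcard : A.card = B.card + (A \ B).card := by
      rw [add_comm, Finset.card_sdiff_add_card_eq_card hA.2]
    have hset : U \ A = (U \ B) \ (A \ B) := by
      ext x
      simp only [Finset.mem_sdiff]
      have := @hA.2 x
      have := @hA.1 x
      tauto
    rw [hcard, hset, pow_add, mul_assoc]

end MUCM

open MUCM in
set_option maxHeartbeats 1000000 in
/-- **Many uniquely crossing matchings.** For `n ≥ 2d` there is a set `𝓜` of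
`d`-matchings on `[n]` with `|𝓜| ≥ C(n,d)/(4·2^d)` and a set `𝓢` of `d`-subsets such
that every `S ∈ 𝓢` is fully crossed by a unique matching in `𝓜`, and every `M ∈ 𝓜`
fully crosses at least one `S ∈ 𝓢`. -/
theorem many_uniquely_crossing_matchings (n d : ℕ) (hd : 1 ≤ d) (hnd : 2 * d ≤ n) :
    ∃ (𝓜 : Finset (Finset (Fin n × Fin n))) (𝓢 : Finset (Finset (Fin n))),
      (∀ M ∈ 𝓜, IsMatching n d M) ∧
      (∀ S ∈ 𝓢, S.card = d) ∧
      (𝓜.card : ℝ) ≥ (n.choose d : ℝ) / (4 * 2 ^ d) ∧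
      (∀ S ∈ 𝓢, ∃! M, M ∈ 𝓜 ∧ FullyCrosses n M S) ∧
      (∀ M ∈ 𝓜, ∃ S ∈ 𝓢, FullyCrosses n M S) := by
  classical
  set U : Finset (Finset (Fin n × Fin n)) := allM n d with hU
  set E : ℕ := (n - d).descFactorial d with hEdef
  have hdn : d ≤ n - d := Nat.le_sub_of_add_le (by omega)
  have hE1 : 1 ≤ E := Nat.pos_of_ne_zero
    (fun h => absurd (Nat.descFactorial_eq_zero_iff_lt.mp h) (not_lt.mpr hdn))
  have hEr : (1 : ℝ) ≤ (E : ℝ) := by exact_mod_cast hE1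
  set p : ℝ := 1 / (2 * E) with hpdef
  set q : ℝ := 1 - p with hqdef
  have hp0 : 0 < p := by rw [hpdef]; positivity
  have hple : p ≤ 1 / 2 := by
    rw [hpdef, div_le_div_iff₀ (by positivity) (by norm_num)]
    nlinarith
  have hq0 : 0 < q := by rw [hqdef]; linarith
  have hpq : p + q = 1 := by rw [hqdef]; ring
  set P : Finset (Finset (Finset (Fin n × Fin n))) := U.powerset with hP
  set w : Finset (Finset (Fin n × Fin n)) → ℝ :=
    fun A => p ^ A.card * q ^ ((U \ A).card) with hw
  have hw0 : ∀ A, 0 < w A := fun A => by rw [hw]; positivity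
  have key1 : ∀ B : Finset (Finset (Fin n × Fin n)), B ⊆ U →
      ∑ A ∈ P.filter (fun A => B ⊆ A), w A = p ^ B.card := by
    intro B hB
    simp only [hP, hw]
    rw [weight_sum p q U B hB, hpq, one_pow, mul_one]
  set good : Finset (Finset (Fin n × Fin n)) → Finset (Finset (Fin n × Fin n)) :=
    fun A => A.filter (fun M => ∃ S : Finset (Fin n), S.card = d ∧ FullyCrosses n M S ∧
      ∀ M' ∈ A, FullyCrosses n M' S → M' = M) with hgood
  set Pairs : Finset (Finset (Fin n × Fin n) × Finset (Fin n × Fin n)) :=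
    U.biUnion (fun M => ((crossers n d (S0 M)).erase M).image (fun M' => (M, M'))) with hPairs
  have mem_Pairs : ∀ z, z ∈ Pairs ↔ z.1 ∈ U ∧ z.2 ∈ crossers n d (S0 z.1) ∧ z.2 ≠ z.1 := by
    intro z
    rw [hPairs, Finset.mem_biUnion]
    constructor
    · rintro ⟨M, hM, hz⟩
      obtain ⟨M', hM', rfl⟩ := Finset.mem_image.mp hz
      obtain ⟨hne, hmem⟩ := Finset.mem_erase.mp hM'
      exact ⟨hM, hmem, hne⟩
    · rintro ⟨h1, h2, h3⟩
      exact ⟨z.1, h1, Finset.mem_image.mpr ⟨z.2, Finset.mem_erase.mpr ⟨h3, h2⟩, rfl⟩⟩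
  have hPairs_card : Pairs.card = U.card * (E - 1) := by
    rw [hPairs, Finset.card_biUnion]
    · rw [Finset.sum_congr rfl (fun M hM => ?_), Finset.sum_const, smul_eq_mul]
      rw [Finset.card_image_of_injective _ (fun a b hab => (Prod.ext_iff.mp hab).2)]
      have hMm : IsMatching n d M := mem_allM.mp hM
      have hMc : M ∈ crossers n d (S0 M) := mem_crossers.mpr ⟨hMm, S0_crosses hMm⟩
      rw [Finset.card_erase_of_mem hMc, crossers_card (S0_card hMm)]
    · intro x _ y _ hxy
      simp only [Finset.disjoint_left]
      intro z hz hz'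
      obtain ⟨a, -, ha⟩ := Finset.mem_image.mp hz
      obtain ⟨b, -, hb⟩ := Finset.mem_image.mp hz'
      rw [← ha] at hb
      exact hxy (Prod.ext_iff.mp hb).1.symm
  have perA : ∀ A ∈ P, A.card ≤ (good A).card +
      (Pairs.filter (fun z => z.1 ∈ A ∧ z.2 ∈ A)).card := by
    intro A hA
    have hAU : A ⊆ U := Finset.mem_powerset.mp hA
    have hsub : good A ⊆ A := Finset.filter_subset _ _
    have hbad : (A \ good A).card ≤ (Pairs.filter (fun z => z.1 ∈ A ∧ z.2 ∈ A)).card := by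
      apply Finset.card_le_card_of_injOn
        (fun M => if h : ∃ M', M' ∈ A ∧ FullyCrosses n M' (S0 M) ∧ M' ≠ M
          then (M, Classical.choose h) else (M, M))
      · intro M hM
        obtain ⟨hMA, hMg⟩ := Finset.mem_sdiff.mp hM
        have hMm : IsMatching n d M := mem_allM.mp (hAU hMA)
        have hex : ∃ M', M' ∈ A ∧ FullyCrosses n M' (S0 M) ∧ M' ≠ M := by
          by_contra hcon
          push_neg at hcon
          apply hMg
          simp only [hgood]
          refine Finset.mem_filter.mpr ⟨hMA, S0 M, S0_card hMm, S0_crosses hMm, ?_⟩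
          intro M' hM' hX'
          by_contra hne
          exact hne (hcon M' hM' hX')
        beta_reduce
        rw [dif_pos hex]
        obtain ⟨hW1, hW2, hW3⟩ := Classical.choose_spec hex
        refine Finset.mem_filter.mpr ⟨(mem_Pairs _).mpr ⟨hAU hMA, ?_, hW3⟩, hMA, hW1⟩
        exact mem_crossers.mpr ⟨mem_allM.mp (hAU hW1), hW2⟩
      · intro M _ M' _ h
        have comp : ∀ N : Finset (Fin n × Fin n),
            ((if h : ∃ M', M' ∈ A ∧ FullyCrosses n M' (S0 N) ∧ M' ≠ N
              then (N, Classical.choose h) else (N, N)).1) = N := by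
          intro N
          split <;> rfl
        have hfst := congrArg Prod.fst h
        rwa [comp, comp] at hfst
    have := Finset.card_sdiff_add_card_eq_card hsub
    omega
  have sum1 : ∑ A ∈ P, w A * (A.card : ℝ) = (U.card : ℝ) * p := by
    have step : ∀ A ∈ P, w A * (A.card : ℝ) = ∑ M ∈ U, (if M ∈ A then w A else 0) := by
      intro A hA
      rw [Finset.sum_ite_mem, Finset.sum_const,
        Finset.inter_eq_right.mpr (Finset.mem_powerset.mp hA), nsmul_eq_mul]
      exact mul_comm _ _
    rw [Finset.sum_congr rfl step, Finset.sum_comm]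
    have inner : ∀ M ∈ U, ∑ A ∈ P, (if M ∈ A then w A else 0) = p := by
      intro M hM
      rw [← Finset.sum_filter]
      have heq : P.filter (fun A => M ∈ A) = P.filter (fun A => {M} ⊆ A) := by
        simp [Finset.singleton_subset_iff]
      rw [heq, key1 {M} (Finset.singleton_subset_iff.mpr hM), Finset.card_singleton, pow_one]
    rw [Finset.sum_congr rfl inner, Finset.sum_const, nsmul_eq_mul]
  have sum2 : ∑ A ∈ P, w A * ((Pairs.filter (fun z => z.1 ∈ A ∧ z.2 ∈ A)).card : ℝ)
      = (Pairs.card : ℝ) * p ^ 2 := by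
    have step : ∀ A ∈ P, w A * ((Pairs.filter (fun z => z.1 ∈ A ∧ z.2 ∈ A)).card : ℝ)
        = ∑ z ∈ Pairs, (if z.1 ∈ A ∧ z.2 ∈ A then w A else 0) := by
      intro A _
      rw [Finset.sum_ite, Finset.sum_const, Finset.sum_const, smul_zero, add_zero,
        nsmul_eq_mul]
      exact mul_comm _ _
    rw [Finset.sum_congr rfl step, Finset.sum_comm]
    have inner : ∀ z ∈ Pairs, ∑ A ∈ P, (if z.1 ∈ A ∧ z.2 ∈ A then w A else 0) = p ^ 2 := by
      intro z hz
      obtain ⟨hz1, hz2, hz3⟩ := (mem_Pairs z).mp hz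
      have hz2U : z.2 ∈ U := mem_allM.mpr (mem_crossers.mp hz2).1
      rw [← Finset.sum_filter]
      have heq : P.filter (fun A => z.1 ∈ A ∧ z.2 ∈ A)
          = P.filter (fun A => {z.1, z.2} ⊆ A) := by
        apply Finset.filter_congr
        intro A _
        simp [Finset.insert_subset_iff, Finset.singleton_subset_iff]
      rw [heq, key1 {z.1, z.2} (Finset.insert_subset hz1
        (Finset.singleton_subset_iff.mpr hz2U)), Finset.card_pair (Ne.symm hz3)]
    rw [Finset.sum_congr rfl inner, Finset.sum_const, nsmul_eq_mul]
  have total : ∑ A ∈ P, w A = 1 := by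
    have := key1 ∅ (Finset.empty_subset U)
    simpa using this
  set c : ℝ := (n.choose d : ℝ) / (4 * 2 ^ d) with hc
  have main : ∃ A ∈ P, c ≤ ((good A).card : ℝ) := by
    by_contra hcon
    push_neg at hcon
    have lt : ∑ A ∈ P, w A * ((good A).card : ℝ) < ∑ A ∈ P, w A * c := by
      apply Finset.sum_lt_sum_of_nonempty
      · exact ⟨∅, Finset.empty_mem_powerset U⟩
      · intro A hA
        exact mul_lt_mul_of_pos_left (hcon A hA) (hw0 A)
    rw [← Finset.sum_mul, total, one_mul] at lt
    have ge1 : ∑ A ∈ P, (w A * (A.card : ℝ) -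
            w A * ((Pairs.filter (fun z => z.1 ∈ A ∧ z.2 ∈ A)).card : ℝ))
        ≤ ∑ A ∈ P, w A * ((good A).card : ℝ) := by
      apply Finset.sum_le_sum
      intro A hA
      have h := perA A hA
      have h' : (A.card : ℝ) ≤ ((good A).card : ℝ) +
          ((Pairs.filter (fun z => z.1 ∈ A ∧ z.2 ∈ A)).card : ℝ) := by exact_mod_cast h
      nlinarith [(hw0 A).le]
    rw [Finset.sum_sub_distrib, sum1, sum2] at ge1
    have hPc : (Pairs.card : ℝ) = (U.card : ℝ) * ((E : ℝ) - 1) := by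
      rw [hPairs_card]
      push_cast [Nat.cast_sub hE1]
      ring
    rw [hPc] at ge1
    have hTc : (n.choose d : ℝ) * (E : ℝ) ≤ (U.card : ℝ) * 2 ^ d := by
      exact_mod_cast double_count (n := n) (d := d)
    have hUc : (0 : ℝ) ≤ (U.card : ℝ) := Nat.cast_nonneg _
    have hE0 : (0 : ℝ) < (E : ℝ) := by linarith
    have harith : (U.card : ℝ) / (4 * E)
        ≤ (U.card : ℝ) * p - (U.card : ℝ) * ((E : ℝ) - 1) * p ^ 2 := by
      have hkey : (U.card : ℝ) * p - (U.card : ℝ) * ((E : ℝ) - 1) * p ^ 2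
          - (U.card : ℝ) / (4 * E) = (U.card : ℝ) / (4 * (E : ℝ) ^ 2) := by
        rw [hpdef]
        field_simp
        ring
      have hnn : (0 : ℝ) ≤ (U.card : ℝ) / (4 * (E : ℝ) ^ 2) := by positivity
      linarith
    have hT4E : c ≤ (U.card : ℝ) / (4 * E) := by
      rw [hc, div_le_div_iff₀ (by positivity) (by positivity)]
      nlinarith
    linarith
  obtain ⟨A, hA, hAc⟩ := main
  have hAU : A ⊆ U := Finset.mem_powerset.mp hA
  refine ⟨good A, ((univ : Finset (Fin n)).powersetCard d).filter
    (fun S => ∃! M, M ∈ A ∧ FullyCrosses n M S), ?_, ?_, ?_, ?_, ?_⟩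
  · intro M hM
    exact mem_allM.mp (hAU (Finset.filter_subset _ _ hM))
  · intro S hS
    exact Finset.mem_powersetCard_univ.mp (Finset.mem_filter.mp hS).1
  · exact hAc
  · intro S hS
    obtain ⟨hS1, M₀, hM₀, huniq⟩ := Finset.mem_filter.mp hS
    have hM₀g : M₀ ∈ good A := by
      simp only [hgood]
      refine Finset.mem_filter.mpr ⟨hM₀.1, S, Finset.mem_powersetCard_univ.mp hS1, hM₀.2, ?_⟩
      intro M' hM' hX'
      exact huniq M' ⟨hM', hX'⟩
    refine ⟨M₀, ⟨hM₀g, hM₀.2⟩, ?_⟩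
    rintro M ⟨hMg, hMX⟩
    exact huniq M ⟨Finset.filter_subset _ _ hMg, hMX⟩
  · intro M hM
    obtain ⟨hMA, S, hSc, hSX, hSuniq⟩ := Finset.mem_filter.mp hM
    refine ⟨S, Finset.mem_filter.mpr ⟨Finset.mem_powersetCard_univ.mpr hSc, ?_⟩, hSX⟩
    exact ⟨M, ⟨hMA, hSX⟩, fun M' hM' => hSuniq M' hM'.1 hM'.2⟩
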